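/- For every ε ∈ (0,1) and every y in the open interval (y₁(ε), y₂(ε)), one has Q(y) = b(ε) − 3y² + 2y³ > 0. -/
import Mathlib


/-- The parameter `b(ε) = 1/2 − ((1 − 3ε²)/4)·√(4 − 3ε²)` of the Sasaki–Einstein
metric `Y^{p,q}`, with `ε = q/p`. -/
noncomputable def ypqB (ε : ℝ) : ℝ :=
  1/2 - ((1 - 3*ε^2)/4) * Real.sqrt (4 - 3*ε^2)

/-- The endpoint `y₁(ε) = (2 − 3ε − √(4 − 3ε²))/4`. -/
noncomputable def ypqY1 (ε : ℝ) : ℝ := (2 - 3*ε - Real.sqrt (4 - 3*ε^2))/4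

/-- The endpoint `y₂(ε) = (2 + 3ε − √(4 − 3ε²))/4`. -/
noncomputable def ypqY2 (ε : ℝ) : ℝ := (2 + 3*ε - Real.sqrt (4 - 3*ε^2))/4

/-- For every `ε ∈ (0,1)` and every `y ∈ (y₁(ε), y₂(ε))`, one has
`Q(y) = b(ε) − 3y² + 2y³ > 0`. -/
theorem ypq_Q_pos :
    ∀ ε ∈ Set.Ioo (0 : ℝ) 1, ∀ y ∈ Set.Ioo (ypqY1 ε) (ypqY2 ε),
      0 < ypqB ε - 3*y^2 + 2*y^3 := by
  rintro ε ⟨hε0, hε1⟩ y ⟨hy1, hy2⟩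
  set s := Real.sqrt (4 - 3*ε^2) with hs
  have h4 : (0:ℝ) < 4 - 3*ε^2 := by nlinarith
  have hs0 : 0 ≤ s := Real.sqrt_nonneg _
  have hs2 : s^2 = 4 - 3*ε^2 := Real.sq_sqrt h4.le
  have hsε : ε < s := by nlinarith
  have hy2' : y < (2 + 3*ε - s)/4 := hy2
  have hy1' : (2 - 3*ε - s)/4 < y := hy1
  have hy3 : y < (1 + s)/2 := by nlinarith
  have key : ypqB ε - 3*y^2 + 2*y^3 =
      2*(y - (2 - 3*ε - s)/4)*((2 + 3*ε - s)/4 - y)*((1 + s)/2 - y) := by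
    simp only [ypqB, ← hs]
    linear_combination (s/16 + 3*y/8 - 3/16) * hs2
  rw [key]
  have h1 : 0 < y - (2 - 3*ε - s)/4 := by linarith
  have h2 : 0 < (2 + 3*ε - s)/4 - y := by linarith
  have h3 : 0 < (1 + s)/2 - y := by linarith
  positivity
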